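/- If {T_i}_{i∈I} is a (C,C')-controlled K-operator frame with bounds A, B, and Q ∈ End_A*(H) commutes with C, C', and K, then {T_i Q}_{i∈I} is a (C,C')-controlled (Q*K)-operator frame with bounds A and B‖Q‖². -/

import Mathlib

open scoped RightActions

/-- The December-2024 Mathlib `CStarModule` (right `Aᵐᵒᵖ`-action), restated verbatim:
current Mathlib's `CStarModule` now uses a left `A`-action. -/
class CStarModuleOld (A : outParam <| Type*) (E : Type*) [NonUnitalSemiring A] [StarRing A]
    [Module ℂ A] [AddCommGroup E] [Module ℂ E] [PartialOrder A] [SMul Aᵐᵒᵖ E] [Norm A] [Norm E]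
    extends Inner A E where
  inner_add_right {x} {y} {z} : inner x (y + z) = inner x y + inner x z
  inner_self_nonneg {x} : 0 ≤ inner x x
  inner_self {x} : inner x x = 0 ↔ x = 0
  inner_op_smul_right {a : A} {x y : E} : inner x (y <• a) = inner x y * a
  inner_smul_right_complex {z : ℂ} {x} {y} : inner x (z • y) = z • inner x y
  star_inner x y : star (inner x y) = inner y x
  norm_eq_sqrt_norm_inner_self x : ‖x‖ = √‖inner x x‖

variable {A : Type*} [CStarAlgebra A] [PartialOrder A] [StarOrderedRing A]
variable {H : Type*} [NormedAddCommGroup H] [NormedSpace ℂ H] [CompleteSpace H]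
  [SMul Aᵐᵒᵖ H] [CStarModuleOld A H]

/-- `S` is the adjoint of `T` with respect to the `A`-valued inner product. -/
def IsAdjointOf (T S : H →L[ℂ] H) : Prop :=
  ∀ x y : H, (inner A (T x) y : A) = inner A x (S y)

/-- `C` belongs to `GL⁺(H)` : invertible (with adjointable inverse), self-adjoint
and positive with respect to the `A`-valued inner product. -/
def MemGLPlus (C : H →L[ℂ] H) : Prop :=
  (∃ Ci : H →L[ℂ] H, Ci.comp C = ContinuousLinearMap.id ℂ H ∧
      C.comp Ci = ContinuousLinearMap.id ℂ H) ∧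
  (∀ x y : H, (inner A (C x) y : A) = inner A x (C y)) ∧
  (∀ x : H, (0 : A) ≤ inner A x (C x))

lemma CStarModuleOld.inner_sub_right {x y z : H} :
    inner A x (y - z) = inner A x y - inner A x z := by
  have h := CStarModuleOld.inner_add_right (A := A) (x := x) (y := y - z) (z := z)
  rw [sub_add_cancel] at h
  rw [h, add_sub_cancel_right]

lemma CStarModuleOld.inner_sub_left {x y z : H} :
    inner A (x - y) z = inner A x z - inner A y z := by
  rw [← CStarModuleOld.star_inner z (x - y), CStarModuleOld.inner_sub_right, star_sub,
    CStarModuleOld.star_inner, CStarModuleOld.star_inner]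

lemma CStarModuleOld.inner_op_smul_left {a : A} {x y : H} :
    inner A (x <• a) y = star a * inner A x y := by
  rw [← CStarModuleOld.star_inner y (x <• a), CStarModuleOld.inner_op_smul_right, star_mul,
    CStarModuleOld.star_inner]

lemma CStarModuleOld.norm_sq_eq {x : H} : ‖x‖ ^ 2 = ‖inner A x x‖ := by
  rw [CStarModuleOld.norm_eq_sqrt_norm_inner_self (A := A) x, Real.sq_sqrt (norm_nonneg _)]

lemma CStarModuleOld.isSelfAdjoint_inner_self {x : H} : IsSelfAdjoint (inner A x x) :=
  CStarModuleOld.star_inner x x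

/-- An adjointable operator is `A`-linear for the right `A`-action. -/
lemma aux_adj_op_smul {Q Qs : H →L[ℂ] H} (hQ : IsAdjointOf (A := A) Q Qs) (a : A) (z : H) :
    Q (z <• a) = (Q z) <• a := by
  set d := Q (z <• a) - (Q z) <• a with hd_def
  have hd : (inner A d d : A) = 0 := by
    conv_lhs => rw [hd_def]
    rw [CStarModuleOld.inner_sub_left, hQ (z <• a) d, CStarModuleOld.inner_op_smul_left,
      CStarModuleOld.inner_op_smul_left, hQ z d, sub_self]
  exact sub_eq_zero.mp (CStarModuleOld.inner_self.mp hd)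

lemma aux_rsmul_nonneg {b : ℝ} (hb : 0 ≤ b) {v : A} (hv : 0 ≤ v) : 0 ≤ b • v := by
  have hs : CFC.sqrt v * CFC.sqrt v = v := CFC.sqrt_mul_sqrt_self v hv
  have h1 : star (Real.sqrt b • CFC.sqrt v) * (Real.sqrt b • CFC.sqrt v) = b • v := by
    rw [star_smul, star_trivial, (IsSelfAdjoint.of_nonneg (CFC.sqrt_nonneg v)).star_eq,
      smul_mul_smul_comm, hs, Real.mul_self_sqrt hb]
  rw [← h1]; exact star_mul_self_nonneg _

lemma aux_rsmul_le_rsmul {b : ℝ} (hb : 0 ≤ b) {v w : A} (h : v ≤ w) : b • v ≤ b • w := by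
  rw [← sub_nonneg, ← smul_sub]
  exact aux_rsmul_nonneg hb (sub_nonneg.mpr h)

/-- For `0 ≤ p` and `ε > 0`, the inverse square root and square root of `p + ε`. -/
lemma aux_exists_inv_sqrt {p : A} (hp : 0 ≤ p) {ε : ℝ} (hε : 0 < ε) :
    ∃ a s : A, IsSelfAdjoint a ∧ IsSelfAdjoint s ∧ s * a = 1 ∧ a * s = 1 ∧
      a * p * a ≤ 1 ∧ s * s = p + ε • 1 := by
  have hsa : IsSelfAdjoint p := .of_nonneg hp
  have hspec : ∀ t ∈ spectrum ℝ p, 0 ≤ t := fun t ht => spectrum_nonneg_of_nonneg hp ht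
  set g : ℝ → ℝ := fun t => Real.sqrt (t + ε) with hg_def
  set f : ℝ → ℝ := fun t => (Real.sqrt (t + ε))⁻¹ with hf_def
  have hpos : ∀ t ∈ spectrum ℝ p, 0 < Real.sqrt (t + ε) := fun t ht =>
    Real.sqrt_pos.mpr (by linarith [hspec t ht])
  have hg : Continuous g := by fun_prop
  have hf : ContinuousOn f (spectrum ℝ p) :=
    ContinuousOn.inv₀ hg.continuousOn (fun t ht => (hpos t ht).ne')
  have hid : ContinuousOn (fun t : ℝ => t) (spectrum ℝ p) := continuousOn_id
  refine ⟨cfc f p, cfc g p, cfc_predicate f p, cfc_predicate g p, ?_, ?_, ?_, ?_⟩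
  · rw [← cfc_mul g f p hg.continuousOn hf, ← cfc_one ℝ p]
    exact cfc_congr fun t ht => mul_inv_cancel₀ (hpos t ht).ne'
  · rw [← cfc_mul f g p hf hg.continuousOn, ← cfc_one ℝ p]
    exact cfc_congr fun t ht => inv_mul_cancel₀ (hpos t ht).ne'
  · have key : cfc (fun t : ℝ => f t * t * f t) p = cfc f p * p * cfc f p := by
      rw [cfc_mul (fun t => f t * t) f p (hf.mul hid) hf, cfc_mul f (fun t => t) p hf hid, cfc_id' ℝ p]
    rw [← key]
    refine cfc_le_one _ _ fun t ht => ?_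
    have h1 : (0:ℝ) ≤ t := hspec t ht
    have h2 := hpos t ht
    have h3 : Real.sqrt (t + ε) * Real.sqrt (t + ε) = t + ε :=
      Real.mul_self_sqrt (by linarith)
    have h4 : f t * t * f t = t / (Real.sqrt (t + ε) * Real.sqrt (t + ε)) := by
      rw [hf_def]; field_simp
    rw [h4, h3, div_le_one (by linarith)]
    linarith
  · rw [← cfc_mul g g p hg.continuousOn hg.continuousOn,
      cfc_congr (g := fun t : ℝ => t + ε)
        (fun t ht => Real.mul_self_sqrt (by linarith [hspec t ht])),
      cfc_add p _ _ hid continuousOn_const, cfc_id' ℝ p, cfc_const ε p,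
      Algebra.algebraMap_eq_smul_one]

open Filter Topology in
/-- For an adjointable operator `Q` on a Hilbert C*-module,
`⟪Qx, Qx⟫ ≤ ‖Q‖ ^ 2 • ⟪x, x⟫`. -/
lemma aux_key_inner_le {Q Qs : H →L[ℂ] H} (hQ : IsAdjointOf (A := A) Q Qs) (x : H) :
    (inner A (Q x) (Q x) : A) ≤ (‖Q‖ ^ 2) • (inner A x x : A) := by
  obtain hA | hA := subsingleton_or_nontrivial A
  · exact le_of_eq (Subsingleton.elim _ _)
  set p : A := inner A x x with hp_def
  set q : A := inner A (Q x) (Q x) with hq_def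
  have hp : 0 ≤ p := CStarModuleOld.inner_self_nonneg
  have hq : 0 ≤ q := CStarModuleOld.inner_self_nonneg
  have step : ∀ ε : ℝ, 0 < ε → q ≤ ‖Q‖ ^ 2 • p + (‖Q‖ ^ 2 * ε) • (1 : A) := by
    intro ε hε
    obtain ⟨a, s, hasa, hssa, hsa1, has1, hapa, hss⟩ := aux_exists_inv_sqrt hp hε
    set y : H := x <• a with hy_def
    have hyy : (inner A y y : A) = a * p * a := by
      rw [hy_def, CStarModuleOld.inner_op_smul_left, CStarModuleOld.inner_op_smul_right,
        hasa.star_eq, ← hp_def, mul_assoc]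
    have hyn : ‖y‖ ^ 2 ≤ 1 := by
      rw [CStarModuleOld.norm_sq_eq (A := A)]
      calc ‖(inner A y y : A)‖ ≤ ‖(1 : A)‖ :=
            CStarAlgebra.norm_le_norm_of_nonneg_of_le CStarModuleOld.inner_self_nonneg
              (hyy ▸ hapa)
        _ = 1 := CStarRing.norm_one
    have hy1 : ‖y‖ ≤ 1 := by nlinarith [norm_nonneg y]
    have hQy : Q y = (Q x) <• a := aux_adj_op_smul hQ a x
    have hqa : (inner A (Q y) (Q y) : A) = a * q * a := by
      rw [hQy, CStarModuleOld.inner_op_smul_left, CStarModuleOld.inner_op_smul_right,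
        hasa.star_eq, ← hq_def, mul_assoc]
    have haqa_sa : IsSelfAdjoint (a * q * a) := by
      rw [← hqa]; exact CStarModuleOld.isSelfAdjoint_inner_self
    have hno : ‖a * q * a‖ ≤ ‖Q‖ ^ 2 := by
      rw [← hqa, ← CStarModuleOld.norm_sq_eq (A := A)]
      calc ‖Q y‖ ^ 2 ≤ (‖Q‖ * ‖y‖) ^ 2 := by
            have := Q.le_opNorm y
            nlinarith [norm_nonneg (Q y)]
        _ ≤ ‖Q‖ ^ 2 := by nlinarith [norm_nonneg Q, norm_nonneg y]
    have h5 : a * q * a ≤ algebraMap ℝ A (‖Q‖ ^ 2) := by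
      calc a * q * a ≤ algebraMap ℝ A ‖a * q * a‖ :=
            IsSelfAdjoint.le_algebraMap_norm_self haqa_sa
        _ ≤ algebraMap ℝ A (‖Q‖ ^ 2) := by
            rw [← sub_nonneg, ← map_sub, Algebra.algebraMap_eq_smul_one]
            exact aux_rsmul_nonneg (by linarith)
              (by simpa using star_mul_self_nonneg (1 : A))
    have h6 := star_left_conjugate_le_conjugate h5 s
    rw [hssa.star_eq] at h6
    have h7 : s * (a * q * a) * s = q := by
      have h : s * (a * q * a) * s = (s * a) * q * (a * s) := by noncomm_ring
      rw [h, hsa1, has1, one_mul, mul_one]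
    have h8 : s * algebraMap ℝ A (‖Q‖ ^ 2) * s = ‖Q‖ ^ 2 • p + (‖Q‖ ^ 2 * ε) • (1 : A) := by
      rw [Algebra.algebraMap_eq_smul_one, mul_smul_comm, smul_mul_assoc, mul_one, hss,
        smul_add, smul_smul]
    rw [h7, h8] at h6
    exact h6
  have hT : Tendsto (fun n : ℕ => ‖Q‖ ^ 2 • p + (‖Q‖ ^ 2 * (1 / (n + 1))) • (1 : A))
      atTop (𝓝 (‖Q‖ ^ 2 • p)) := by
    have h0 : Tendsto (fun n : ℕ => ‖Q‖ ^ 2 * (1 / (n + 1) : ℝ)) atTop (𝓝 0) := by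
      simpa using tendsto_one_div_add_atTop_nhds_zero_nat.const_mul (‖Q‖ ^ 2)
    simpa using tendsto_const_nhds.add (h0.smul_const (1 : A))
  exact ge_of_tendsto hT (Eventually.of_forall fun n => step _ (by positivity))

/-- if `{T_i}` is a `(C,C')`-controlled `K`-operator frame with bounds
`A, B` and `Q` commutes with `C`, `C'` and `K`, then `{T_i Q}` is a `(C,C')`-controlled
`Q*K`-operator frame with bounds `A` and `B‖Q‖²`. Note `(Q*K)* = K*Q`. -/
theorem stmt_4 {ι : Type*} (C C' K Ks Q Qs : H →L[ℂ] H) (T : ι → H →L[ℂ] H)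
    (hC : MemGLPlus (A := A) C) (hC' : MemGLPlus (A := A) C')
    (hK : IsAdjointOf (A := A) K Ks) (hQ : IsAdjointOf (A := A) Q Qs)
    (hQC : Q.comp C = C.comp Q) (hQC' : Q.comp C' = C'.comp Q)
    (hQK : Q.comp K = K.comp Q)
    (a b : ℝ) (ha : 0 < a) (hb : 0 < b)
    (hframe : ∀ x : H,
      a • (inner A (Ks x) (Ks x) : A) ≤ ∑' i, (inner A (T i (C x)) (T i (C' x)) : A) ∧
      ∑' i, (inner A (T i (C x)) (T i (C' x)) : A) ≤ b • inner A x x) :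
    ∀ x : H,
      a • (inner A (Ks (Q x)) (Ks (Q x)) : A) ≤
        ∑' i, (inner A (T i (Q (C x))) (T i (Q (C' x))) : A) ∧
      ∑' i, (inner A (T i (Q (C x))) (T i (Q (C' x))) : A) ≤
        (b * ‖Q‖ ^ 2) • inner A x x := by
  intro x
  have h1 : Q (C x) = C (Q x) := by
    simpa using DFunLike.congr_fun hQC x
  have h2 : Q (C' x) = C' (Q x) := by
    simpa using DFunLike.congr_fun hQC' x
  obtain ⟨hl, hu⟩ := hframe (Q x)
  refine ⟨?_, ?_⟩
  · simpa only [h1, h2] using hl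
  · calc ∑' i, (inner A (T i (Q (C x))) (T i (Q (C' x))) : A)
        = ∑' i, (inner A (T i (C (Q x))) (T i (C' (Q x))) : A) := by rw [h1, h2]
      _ ≤ b • inner A (Q x) (Q x) := hu
      _ ≤ b • (‖Q‖ ^ 2 • (inner A x x : A)) :=
          aux_rsmul_le_rsmul hb.le (aux_key_inner_le hQ x)
      _ = (b * ‖Q‖ ^ 2) • inner A x x := by rw [smul_smul]
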